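/- arXiv:1307.4024 — 3 statements merged into one kernel-verified Lean document; each statement's English description precedes it below -/
import Mathlib

section
/- For every real p ≥ 1 and all real numbers m₁, m₂ > 0, γ_p is a metric on M(m₁,m₂) = M(m₁) × M(m₂): for all 𝛍, 𝛎, 𝛈 ∈ M(m₁,m₂), γ_p(𝛍,𝛎) is finite and nonnegative, γ_p(𝛍,𝛎) = γ_p(𝛎,𝛍), γ_p(𝛍,𝛈) ≤ γ_p(𝛍,𝛎) + γ_p(𝛎,𝛈), and γ_p(𝛍,𝛎) = 0 if and only if 𝛍 = 𝛎. -/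
open MeasureTheory Set Filter

set_option maxHeartbeats 1000000

noncomputable section

/-- `ℝ^d` with the Euclidean norm. -/
abbrev Euc (d : ℕ) := EuclideanSpace ℝ (Fin d)

/-- The bounded metric `ρ(x,y) = min (1, ‖x - y‖)`. -/
def rho {d : ℕ} (x y : Euc d) : ℝ := min 1 (dist x y)

/-- `M(m)`: finite nonnegative Borel measures on `ℝ^d` with total mass `m`. -/
def Mset (d : ℕ) (m : ℝ) : Set (Measure (Euc d)) :=
  {μ | μ Set.univ = ENNReal.ofReal m}

/-- `H(μ,ν)`: joint representations of the pair `(μ,ν)`, where `μ, ν ∈ M(m)`. -/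
def Hrep {d : ℕ} (m : ℝ) (μ ν : Measure (Euc d)) : Set (Measure (Euc d × Euc d)) :=
  {Q | ∀ A : Set (Euc d), MeasurableSet A →
      Q (A ×ˢ Set.univ) = ENNReal.ofReal m * μ A ∧
      Q (Set.univ ×ˢ A) = ENNReal.ofReal m * ν A}

/-- The Wasserstein distance `W_p` on `M(m)` associated with the metric `ρ`. -/
def Wp {d : ℕ} (p m : ℝ) (μ ν : Measure (Euc d)) : ℝ :=
  sInf ((fun Q : Measure (Euc d × Euc d) => ∫ z, rho z.1 z.2 ^ p ∂Q) '' Hrep m μ ν) ^ (1 / p)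

/-- The metric `γ_p` on `M(m₁,m₂) = M(m₁) × M(m₂)`. -/
def gammap {d : ℕ} (p m₁ m₂ : ℝ) (x y : Measure (Euc d) × Measure (Euc d)) : ℝ :=
  (Wp p m₁ x.1 y.1 ^ p + Wp p m₂ x.2 y.2 ^ p) ^ (1 / p)

namespace GammaAux

open ENNReal ProbabilityTheory Metric

variable {d : ℕ}

lemma rho_nonneg (x y : Euc d) : 0 ≤ rho x y := le_min zero_le_one dist_nonneg

lemma rho_le_one (x y : Euc d) : rho x y ≤ 1 := min_le_left _ _

lemma rho_comm (x y : Euc d) : rho x y = rho y x := by simp [rho, dist_comm]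

lemma rho_self (x : Euc d) : rho x x = 0 := by simp [rho]

lemma rho_triangle (x y z : Euc d) : rho x z ≤ rho x y + rho y z := by
  rcases le_total 1 (dist x y) with h | h
  · have h1 : rho x y = 1 := min_eq_left h
    have := rho_le_one x z
    have := rho_nonneg y z
    linarith
  rcases le_total 1 (dist y z) with h' | h'
  · have h1 : rho y z = 1 := min_eq_left h'
    have := rho_le_one x z
    have := rho_nonneg x y
    linarith
  · have hxy : rho x y = dist x y := min_eq_right h
    have hyz : rho y z = dist y z := min_eq_right h'
    calc rho x z ≤ dist x z := min_le_right _ _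
      _ ≤ dist x y + dist y z := dist_triangle _ _ _
      _ = rho x y + rho y z := by rw [hxy, hyz]

lemma continuous_rho : Continuous (fun z : Euc d × Euc d => rho z.1 z.2) :=
  continuous_const.min (continuous_fst.dist continuous_snd)

lemma continuous_rhop {p : ℝ} (hp : 0 ≤ p) :
    Continuous (fun z : Euc d × Euc d => rho z.1 z.2 ^ p) := by
  rw [continuous_iff_continuousAt]
  intro z
  exact (Real.continuousAt_rpow_const _ _ (Or.inr hp)).comp continuous_rho.continuousAt

lemma rhop_nonneg {p : ℝ} (x y : Euc d) : 0 ≤ rho x y ^ p :=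
  Real.rpow_nonneg (rho_nonneg x y) p

lemma rhop_le_one {p : ℝ} (hp : 0 ≤ p) (x y : Euc d) : rho x y ^ p ≤ 1 :=
  Real.rpow_le_one (rho_nonneg x y) (rho_le_one x y) hp

/-- The cost of a coupling, as a lower integral. -/
def CostL (p : ℝ) {d : ℕ} (Q : Measure (Euc d × Euc d)) : ℝ≥0∞ :=
  ∫⁻ z, ENNReal.ofReal (rho z.1 z.2 ^ p) ∂Q

lemma cost_eq_toReal {p : ℝ} (hp : 0 ≤ p) (Q : Measure (Euc d × Euc d)) :
    (∫ z, rho z.1 z.2 ^ p ∂Q) = (CostL p Q).toReal :=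
  integral_eq_lintegral_of_nonneg_ae (Eventually.of_forall fun z => rhop_nonneg z.1 z.2)
    (continuous_rhop hp).aestronglyMeasurable

lemma costL_le_mass {p : ℝ} (hp : 0 ≤ p) (Q : Measure (Euc d × Euc d)) :
    CostL p Q ≤ Q Set.univ := by
  calc CostL p Q ≤ ∫⁻ _, 1 ∂Q :=
        lintegral_mono fun z => ENNReal.ofReal_le_one.mpr (rhop_le_one hp z.1 z.2)
    _ = Q Set.univ := by simp

lemma costL_ne_top {p : ℝ} (hp : 0 ≤ p) (Q : Measure (Euc d × Euc d)) [IsFiniteMeasure Q] :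
    CostL p Q ≠ ∞ :=
  ((costL_le_mass hp Q).trans_lt (measure_lt_top Q _)).ne

lemma ofReal_cost {p : ℝ} (hp : 0 ≤ p) (Q : Measure (Euc d × Euc d)) [IsFiniteMeasure Q] :
    ENNReal.ofReal (∫ z, rho z.1 z.2 ^ p ∂Q) = CostL p Q := by
  rw [cost_eq_toReal hp, ENNReal.ofReal_toReal (costL_ne_top hp Q)]

lemma cost_nonneg {p : ℝ} (Q : Measure (Euc d × Euc d)) :
    0 ≤ ∫ z, rho z.1 z.2 ^ p ∂Q :=
  integral_nonneg fun z => rhop_nonneg z.1 z.2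

section Hrep

variable {p m : ℝ} {μ ν η : Measure (Euc d)}

lemma isFiniteMeasure_of_mass (hμ : μ Set.univ = ENNReal.ofReal m) : IsFiniteMeasure μ :=
  ⟨by rw [hμ]; exact ENNReal.ofReal_lt_top⟩

lemma hrep_univ (hμ : μ Set.univ = ENNReal.ofReal m) {Q : Measure (Euc d × Euc d)}
    (hQ : Q ∈ Hrep m μ ν) :
    Q Set.univ = ENNReal.ofReal m * ENNReal.ofReal m := by
  have := (hQ Set.univ MeasurableSet.univ).1
  rwa [Set.univ_prod_univ, hμ] at this

lemma hrep_finite (hμ : μ Set.univ = ENNReal.ofReal m) {Q : Measure (Euc d × Euc d)}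
    (hQ : Q ∈ Hrep m μ ν) : IsFiniteMeasure Q :=
  ⟨by rw [hrep_univ hμ hQ]; exact ENNReal.mul_lt_top ENNReal.ofReal_lt_top ENNReal.ofReal_lt_top⟩

lemma prod_mem_hrep (hμ : μ Set.univ = ENNReal.ofReal m) (hν : ν Set.univ = ENNReal.ofReal m) :
    μ.prod ν ∈ Hrep m μ ν := by
  haveI := isFiniteMeasure_of_mass hμ
  haveI := isFiniteMeasure_of_mass hν
  intro A hA
  rw [Measure.prod_prod, Measure.prod_prod, hμ, hν, mul_comm]
  exact ⟨rfl, rfl⟩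

/-- The set of costs of couplings. -/
def S (p m : ℝ) (μ ν : Measure (Euc d)) : Set ℝ :=
  (fun Q : Measure (Euc d × Euc d) => ∫ z, rho z.1 z.2 ^ p ∂Q) '' Hrep m μ ν

lemma wp_def : Wp p m μ ν = sInf (S p m μ ν) ^ (1 / p) := rfl

lemma S_nonneg : ∀ x ∈ S p m μ ν, (0:ℝ) ≤ x := by
  rintro x ⟨Q, -, rfl⟩
  exact cost_nonneg Q

lemma S_bddBelow : BddBelow (S p m μ ν) := ⟨0, fun x hx => S_nonneg x hx⟩

lemma S_nonempty (hμ : μ Set.univ = ENNReal.ofReal m) (hν : ν Set.univ = ENNReal.ofReal m) :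
    (S p m μ ν).Nonempty :=
  ⟨_, ⟨μ.prod ν, prod_mem_hrep hμ hν, rfl⟩⟩

lemma sInf_S_nonneg : 0 ≤ sInf (S p m μ ν) := Real.sInf_nonneg S_nonneg

lemma wp_nonneg : 0 ≤ Wp p m μ ν := Real.rpow_nonneg sInf_S_nonneg _

lemma wp_le_cost (hp : 1 ≤ p) {Q : Measure (Euc d × Euc d)} (hQ : Q ∈ Hrep m μ ν) :
    Wp p m μ ν ≤ (∫ z, rho z.1 z.2 ^ p ∂Q) ^ (1 / p) :=
  Real.rpow_le_rpow sInf_S_nonneg (csInf_le S_bddBelow ⟨Q, hQ, rfl⟩)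
    (by positivity : (0:ℝ) ≤ 1 / p)

lemma rpow_p_one_div {p : ℝ} (hp : p ≠ 0) {x : ℝ} (hx : 0 ≤ x) :
    (x ^ p) ^ (1 / p) = x := by
  rw [← Real.rpow_mul hx, mul_one_div_cancel hp, Real.rpow_one]

/-- Near-optimal couplings exist. -/
lemma exists_cost_lt (hp : 1 ≤ p) (hμ : μ Set.univ = ENNReal.ofReal m)
    (hν : ν Set.univ = ENNReal.ofReal m) {ε : ℝ} (hε : 0 < ε) :
    ∃ Q ∈ Hrep m μ ν, (∫ z, rho z.1 z.2 ^ p ∂Q) ^ (1 / p) < Wp p m μ ν + ε := by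
  have hp0 : (0:ℝ) < p := lt_of_lt_of_le one_pos hp
  have hWnn : 0 ≤ Wp p m μ ν := wp_nonneg
  have key : sInf (S p m μ ν) < (Wp p m μ ν + ε) ^ p := by
    by_contra hcon
    push_neg at hcon
    have h2 := Real.rpow_le_rpow (by positivity) hcon (by positivity : (0:ℝ) ≤ 1/p)
    rw [rpow_p_one_div hp0.ne' (by positivity)] at h2
    rw [← wp_def] at h2
    linarith
  obtain ⟨s, ⟨Q, hQ, rfl⟩, hs⟩ := (csInf_lt_iff S_bddBelow (S_nonempty hμ hν)).mp key
  refine ⟨Q, hQ, ?_⟩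
  have := Real.rpow_lt_rpow (cost_nonneg Q) hs (by positivity : (0:ℝ) < 1/p)
  rwa [rpow_p_one_div hp0.ne' (by positivity)] at this

/-- Symmetry of `Wp`. -/
lemma wp_symm (hp0 : 0 ≤ p) : Wp p m μ ν = Wp p m ν μ := by
  have key : ∀ (μ ν : Measure (Euc d)), S p m μ ν ⊆ S p m ν μ := by
    rintro μ ν x ⟨Q, hQ, rfl⟩
    refine ⟨Q.map Prod.swap, ?_, ?_⟩
    · intro A hA
      rw [Measure.map_apply measurable_swap (hA.prod MeasurableSet.univ),
        Measure.map_apply measurable_swap (MeasurableSet.univ.prod hA),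
        Set.preimage_swap_prod, Set.preimage_swap_prod]
      exact ⟨(hQ A hA).2, (hQ A hA).1⟩
    · simp only
      rw [integral_map measurable_swap.aemeasurable
        (continuous_rhop hp0).aestronglyMeasurable]
      simp only [Prod.fst_swap, Prod.snd_swap]
      exact integral_congr_ae (Eventually.of_forall fun z => by simp only []; rw [rho_comm])
  rw [wp_def, wp_def, subset_antisymm (key μ ν) (key ν μ)]


/-- `Wp μ μ = 0` via the diagonal coupling. -/
lemma wp_self (hp : 1 ≤ p) (hμ : μ Set.univ = ENNReal.ofReal m) : Wp p m μ μ = 0 := by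
  have hp0 : (0:ℝ) < p := lt_of_lt_of_le one_pos hp
  haveI := isFiniteMeasure_of_mass hμ
  have hdiag : Measurable (fun x : Euc d => (x, x)) := measurable_id.prodMk measurable_id
  have hmem : (0:ℝ) ∈ S p m μ μ := by
    refine ⟨(ENNReal.ofReal m • μ).map (fun x => (x, x)), ?_, ?_⟩
    · intro A hA
      rw [Measure.map_apply hdiag (hA.prod MeasurableSet.univ),
          Measure.map_apply hdiag (MeasurableSet.univ.prod hA)]
      have e1 : (fun x : Euc d => (x, x)) ⁻¹' (A ×ˢ Set.univ) = A := by ext x; simp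
      have e2 : (fun x : Euc d => (x, x)) ⁻¹' (Set.univ ×ˢ A) = A := by ext x; simp
      rw [e1, e2]
      constructor <;> simp [Measure.smul_apply, smul_eq_mul]
    · simp only
      rw [integral_map hdiag.aemeasurable (continuous_rhop hp0.le).aestronglyMeasurable]
      simp [rho_self, Real.zero_rpow hp0.ne']
  have h0 : sInf (S p m μ μ) = 0 :=
    le_antisymm (csInf_le S_bddBelow hmem) sInf_S_nonneg
  rw [wp_def, h0, Real.zero_rpow (one_div_ne_zero hp0.ne')]

/-- The gluing lemma: couplings can be composed, with cost controlled by Minkowski's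
inequality. -/
lemma glue (hp : 1 ≤ p) (hμ : μ Set.univ = ENNReal.ofReal m)
    (hν : ν Set.univ = ENNReal.ofReal m) (hη : η Set.univ = ENNReal.ofReal m)
    {Q₁ Q₂ : Measure (Euc d × Euc d)} (hQ₁ : Q₁ ∈ Hrep m μ ν) (hQ₂ : Q₂ ∈ Hrep m ν η) :
    ∃ Q ∈ Hrep m μ η, (∫ z, rho z.1 z.2 ^ p ∂Q) ^ (1 / p) ≤
      (∫ z, rho z.1 z.2 ^ p ∂Q₁) ^ (1 / p) + (∫ z, rho z.1 z.2 ^ p ∂Q₂) ^ (1 / p) := by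
  have hp0 : (0:ℝ) < p := lt_of_lt_of_le one_pos hp
  haveI hF1 : IsFiniteMeasure Q₁ := hrep_finite hμ hQ₁
  haveI hF2 : IsFiniteMeasure Q₂ := hrep_finite hν hQ₂
  set Q₁s : Measure (Euc d × Euc d) := Q₁.map Prod.swap with hQ₁s
  haveI : IsFiniteMeasure Q₁s := by
    constructor
    rw [hQ₁s, Measure.map_apply measurable_swap MeasurableSet.univ]
    exact measure_lt_top _ _
  set β : Measure (Euc d) := Q₂.fst with hβ
  set κ₁ := Q₁s.condKernel with hκ₁
  set κ₂ := Q₂.condKernel with hκ₂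
  have hfst : Q₁s.fst = β := by
    ext s hs
    rw [Measure.fst_apply hs, Measure.fst_apply hs, hQ₁s,
      Measure.map_apply measurable_swap (measurable_fst hs)]
    have e : Prod.swap ⁻¹' (Prod.fst ⁻¹' s) = (Set.univ : Set (Euc d)) ×ˢ s := by
      ext z; simp [Set.mem_prod]
    have e2 : (Prod.fst ⁻¹' s : Set (Euc d × Euc d)) = s ×ˢ (Set.univ : Set (Euc d)) := by
      ext z; simp [Set.mem_prod]
    rw [e, e2, (hQ₁ s hs).2, (hQ₂ s hs).1]
  have hd1 : β ⊗ₘ κ₁ = Q₁s := by rw [← hfst, hκ₁]; exact Q₁s.disintegrate _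
  have hd2 : β ⊗ₘ κ₂ = Q₂ := Q₂.disintegrate _
  set T₁ : Euc d × (Euc d × Euc d) → Euc d × Euc d := fun w => (w.1, w.2.1) with hT₁def
  set T₂ : Euc d × (Euc d × Euc d) → Euc d × Euc d := fun w => (w.1, w.2.2) with hT₂def
  have hT₁ : Measurable T₁ := measurable_fst.prodMk (measurable_fst.comp measurable_snd)
  have hT₂ : Measurable T₂ := measurable_fst.prodMk (measurable_snd.comp measurable_snd)
  set R : Measure (Euc d × (Euc d × Euc d)) := β ⊗ₘ (κ₁ ×ₖ κ₂) with hR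
  have hmap₁ : R.map T₁ = Q₁s := by
    rw [← hd1]
    ext s hs
    rw [Measure.map_apply hT₁ hs, hR, Measure.compProd_apply (hT₁ hs),
      Measure.compProd_apply hs]
    refine lintegral_congr fun y => ?_
    exact (Kernel.fst_apply' _ _ (measurable_prodMk_left hs)).symm.trans
      (by rw [Kernel.fst_prod])
  have hmap₂ : R.map T₂ = Q₂ := by
    rw [← hd2]
    ext s hs
    rw [Measure.map_apply hT₂ hs, hR, Measure.compProd_apply (hT₂ hs),
      Measure.compProd_apply hs]
    refine lintegral_congr fun y => ?_
    exact (Kernel.snd_apply' _ _ (measurable_prodMk_left hs)).symm.trans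
      (by rw [Kernel.snd_prod])
  have hQmem : R.map Prod.snd ∈ Hrep m μ η := by
    intro A hA
    have hs1 : Prod.snd ⁻¹' (A ×ˢ (Set.univ : Set (Euc d))) =
        T₁ ⁻¹' ((Set.univ : Set (Euc d)) ×ˢ A) := by
      ext w; simp [hT₁def, Set.mem_prod]
    have hs2 : Prod.snd ⁻¹' ((Set.univ : Set (Euc d)) ×ˢ A) =
        T₂ ⁻¹' ((Set.univ : Set (Euc d)) ×ˢ A) := by
      ext w; simp [hT₂def, Set.mem_prod]
    constructor
    · rw [Measure.map_apply measurable_snd (hA.prod MeasurableSet.univ), hs1,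
        ← Measure.map_apply hT₁ (MeasurableSet.univ.prod hA), hmap₁, hQ₁s,
        Measure.map_apply measurable_swap (MeasurableSet.univ.prod hA),
        Set.preimage_swap_prod]
      exact (hQ₁ A hA).1
    · rw [Measure.map_apply measurable_snd (MeasurableSet.univ.prod hA), hs2,
        ← Measure.map_apply hT₂ (MeasurableSet.univ.prod hA), hmap₂]
      exact (hQ₂ A hA).2
  haveI hFQ : IsFiniteMeasure (R.map Prod.snd) := hrep_finite hμ hQmem
  refine ⟨R.map Prod.snd, hQmem, ?_⟩
  -- everything in ℝ≥0∞ first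
  set f : Euc d × (Euc d × Euc d) → ℝ≥0∞ := fun w => ENNReal.ofReal (rho w.2.1 w.1) with hf
  set g : Euc d × (Euc d × Euc d) → ℝ≥0∞ := fun w => ENNReal.ofReal (rho w.1 w.2.2) with hg
  have hfm : Measurable f := ENNReal.measurable_ofReal.comp
    (continuous_rho.comp
      ((continuous_fst.comp continuous_snd).prodMk continuous_fst)).measurable
  have hgm : Measurable g := ENNReal.measurable_ofReal.comp
    (continuous_rho.comp
      (continuous_fst.prodMk (continuous_snd.comp continuous_snd))).measurable
  have hmeas_rhop : Measurable (fun z : Euc d × Euc d => ENNReal.ofReal (rho z.1 z.2 ^ p)) :=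
    ENNReal.measurable_ofReal.comp (continuous_rhop hp0.le).measurable
  have e0 : CostL p (R.map Prod.snd) = ∫⁻ w, ENNReal.ofReal (rho w.2.1 w.2.2 ^ p) ∂ R := by
    rw [CostL, lintegral_map hmeas_rhop measurable_snd]
  have hS1 : Measurable (fun w : Euc d × (Euc d × Euc d) => ((w.2.1, w.1) : Euc d × Euc d)) :=
    (measurable_fst.comp measurable_snd).prodMk measurable_fst
  have hmaps : R.map (fun w : Euc d × (Euc d × Euc d) => ((w.2.1, w.1) : Euc d × Euc d)) = Q₁ := by
    have h1 : (fun w : Euc d × (Euc d × Euc d) => ((w.2.1, w.1) : Euc d × Euc d)) =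
        Prod.swap ∘ T₁ := rfl
    rw [h1, ← Measure.map_map measurable_swap hT₁, hmap₁, hQ₁s,
      Measure.map_map measurable_swap measurable_swap]
    have h2 : (Prod.swap ∘ Prod.swap : Euc d × Euc d → Euc d × Euc d) = id := rfl
    rw [h2, Measure.map_id]
  have e1 : (∫⁻ w, f w ^ p ∂ R) = CostL p Q₁ := by
    calc (∫⁻ w, f w ^ p ∂ R) = ∫⁻ w, ENNReal.ofReal (rho w.2.1 w.1 ^ p) ∂ R :=
          lintegral_congr fun w => ENNReal.ofReal_rpow_of_nonneg (rho_nonneg _ _) hp0.le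
      _ = CostL p Q₁ := by rw [CostL, ← hmaps, lintegral_map hmeas_rhop hS1]
  have e2 : (∫⁻ w, g w ^ p ∂ R) = CostL p Q₂ := by
    calc (∫⁻ w, g w ^ p ∂ R) = ∫⁻ w, ENNReal.ofReal (rho w.1 w.2.2 ^ p) ∂ R :=
          lintegral_congr fun w => ENNReal.ofReal_rpow_of_nonneg (rho_nonneg _ _) hp0.le
      _ = CostL p Q₂ := by rw [CostL, ← hmap₂, lintegral_map hmeas_rhop hT₂]
  have hmono : CostL p (R.map Prod.snd) ≤ ∫⁻ w, ((f + g) w) ^ p ∂ R := by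
    rw [e0]
    refine lintegral_mono fun w => ?_
    rw [← ENNReal.ofReal_rpow_of_nonneg (rho_nonneg _ _) hp0.le]
    refine ENNReal.rpow_le_rpow ?_ hp0.le
    calc ENNReal.ofReal (rho w.2.1 w.2.2)
        ≤ ENNReal.ofReal (rho w.2.1 w.1 + rho w.1 w.2.2) :=
          ENNReal.ofReal_le_ofReal (rho_triangle _ _ _)
      _ = f w + g w := ENNReal.ofReal_add (rho_nonneg _ _) (rho_nonneg _ _)
  have hchain : CostL p (R.map Prod.snd) ^ (1/p) ≤ CostL p Q₁ ^ (1/p) + CostL p Q₂ ^ (1/p) := by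
    rw [← e1, ← e2]
    exact le_trans (ENNReal.rpow_le_rpow hmono (by positivity))
      (ENNReal.lintegral_Lp_add_le hfm.aemeasurable hgm.aemeasurable hp)
  have hne1 : CostL p Q₁ ^ (1/p) ≠ ∞ :=
    ENNReal.rpow_ne_top_of_nonneg (by positivity) (costL_ne_top hp0.le Q₁)
  have hne2 : CostL p Q₂ ^ (1/p) ≠ ∞ :=
    ENNReal.rpow_ne_top_of_nonneg (by positivity) (costL_ne_top hp0.le Q₂)
  rw [cost_eq_toReal hp0.le, cost_eq_toReal hp0.le, cost_eq_toReal hp0.le,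
    ENNReal.toReal_rpow, ENNReal.toReal_rpow, ENNReal.toReal_rpow,
    ← ENNReal.toReal_add hne1 hne2]
  exact ENNReal.toReal_mono (ENNReal.add_ne_top.mpr ⟨hne1, hne2⟩) hchain

/-- Triangle inequality for `Wp`. -/
lemma wp_triangle (hp : 1 ≤ p) (hμ : μ Set.univ = ENNReal.ofReal m)
    (hν : ν Set.univ = ENNReal.ofReal m) (hη : η Set.univ = ENNReal.ofReal m) :
    Wp p m μ η ≤ Wp p m μ ν + Wp p m ν η := by
  refine le_of_forall_pos_le_add fun ε hε => ?_
  obtain ⟨Q₁, hQ₁, hc₁⟩ := exists_cost_lt hp hμ hν (half_pos hε)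
  obtain ⟨Q₂, hQ₂, hc₂⟩ := exists_cost_lt hp hν hη (half_pos hε)
  obtain ⟨Q, hQ, hc⟩ := glue hp hμ hν hη hQ₁ hQ₂
  have h1 := wp_le_cost hp hQ
  linarith

/-- If the Wasserstein distance vanishes, the measures are equal. -/
lemma eq_of_wp_eq_zero (hp : 1 ≤ p) (hm : 0 < m) (hμ : μ Set.univ = ENNReal.ofReal m)
    (hν : ν Set.univ = ENNReal.ofReal m) (hW : Wp p m μ ν = 0) : μ = ν := by
  have hp0 : (0:ℝ) < p := lt_of_lt_of_le one_pos hp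
  have hS0 : sInf (S p m μ ν) = 0 := by
    by_contra hne
    have hpos : 0 < sInf (S p m μ ν) :=
      lt_of_le_of_ne sInf_S_nonneg (Ne.symm hne)
    have h := Real.rpow_pos_of_pos hpos (1/p)
    rw [wp_def] at hW
    linarith
  set μ' := ENNReal.ofReal m • μ with hμ'
  set ν' := ENNReal.ofReal m • ν with hν'
  haveI : IsFiniteMeasure μ' := ⟨by
    rw [hμ', Measure.smul_apply, smul_eq_mul, hμ]
    exact ENNReal.mul_lt_top ENNReal.ofReal_lt_top ENNReal.ofReal_lt_top⟩
  haveI : IsFiniteMeasure ν' := ⟨by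
    rw [hν', Measure.smul_apply, smul_eq_mul, hν]
    exact ENNReal.mul_lt_top ENNReal.ofReal_lt_top ENNReal.ofReal_lt_top⟩
  have hLP : levyProkhorovEDist μ' ν' = 0 := by
    refine le_antisymm ?_ zero_le
    refine levyProkhorovEDist_le_of_forall μ' ν' 0 ?_
    intro ε B hε0 hεtop hB
    set e : ℝ := min ε.toReal 1 with he
    have he0 : 0 < e := lt_min (ENNReal.toReal_pos hε0.ne' hεtop.ne) one_pos
    have he1 : e ≤ 1 := min_le_right _ _
    have heε : ENNReal.ofReal e ≤ ε := by
      calc ENNReal.ofReal e ≤ ENNReal.ofReal ε.toReal :=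
            ENNReal.ofReal_le_ofReal (min_le_left _ _)
        _ = ε := ENNReal.ofReal_toReal hεtop.ne
    obtain ⟨Q, hQ, hQc⟩ : ∃ Q ∈ Hrep m μ ν, (∫ z, rho z.1 z.2 ^ p ∂Q) < e ^ p * e := by
      have hlt : sInf (S p m μ ν) < e ^ p * e := by
        rw [hS0]; positivity
      obtain ⟨s, ⟨Q, hQ, rfl⟩, hs⟩ := (csInf_lt_iff S_bddBelow (S_nonempty hμ hν)).mp hlt
      exact ⟨Q, hQ, hs⟩
    haveI : IsFiniteMeasure Q := hrep_finite hμ hQ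
    have hMark : Q {z : Euc d × Euc d | e ≤ rho z.1 z.2} ≤ ε := by
      have hep : (0:ℝ) < e ^ p := Real.rpow_pos_of_pos he0 p
      have hne0 : ENNReal.ofReal (e ^ p) ≠ 0 := (ENNReal.ofReal_pos.mpr hep).ne'
      have hnetop : ENNReal.ofReal (e ^ p) ≠ ∞ := ENNReal.ofReal_ne_top
      have hsub : {z : Euc d × Euc d | e ≤ rho z.1 z.2} ⊆
          {z : Euc d × Euc d | ENNReal.ofReal (e ^ p) ≤ ENNReal.ofReal (rho z.1 z.2 ^ p)} :=
        fun z hz => ENNReal.ofReal_le_ofReal (Real.rpow_le_rpow he0.le hz hp0.le)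
      have h2 := mul_meas_ge_le_lintegral₀ (μ := Q)
        (ENNReal.measurable_ofReal.comp (continuous_rhop hp0.le).measurable).aemeasurable
        (ENNReal.ofReal (e ^ p))
      have h3 : Q {z : Euc d × Euc d |
          ENNReal.ofReal (e ^ p) ≤ ENNReal.ofReal (rho z.1 z.2 ^ p)} ≤
          CostL p Q / ENNReal.ofReal (e ^ p) := by
        rw [ENNReal.le_div_iff_mul_le (Or.inl hne0) (Or.inl hnetop), mul_comm]
        exact h2
      calc Q {z : Euc d × Euc d | e ≤ rho z.1 z.2}
          ≤ Q {z : Euc d × Euc d |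
              ENNReal.ofReal (e ^ p) ≤ ENNReal.ofReal (rho z.1 z.2 ^ p)} := measure_mono hsub
        _ ≤ CostL p Q / ENNReal.ofReal (e ^ p) := h3
        _ ≤ ENNReal.ofReal (e ^ p * e) / ENNReal.ofReal (e ^ p) := by
            refine ENNReal.div_le_div_right ?_ _
            rw [← ofReal_cost hp0.le Q]
            exact ENNReal.ofReal_le_ofReal hQc.le
        _ = ENNReal.ofReal e := by
            rw [ENNReal.ofReal_mul hep.le, mul_comm, mul_div_assoc, ENNReal.div_self hne0 hnetop, mul_one]
        _ ≤ ε := heε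
    have hincl : ∀ (x y : Euc d) (B : Set (Euc d)), x ∈ B → rho x y < e →
        y ∈ Metric.thickening ε.toReal B := by
      intro x y B hx hr
      have hd : dist y x < e := by
        by_contra hge
        push_neg at hge
        have h4 : e ≤ rho x y := le_min he1 (by rw [dist_comm] at hge; exact hge)
        linarith
      refine Metric.thickening_mono (min_le_left ε.toReal 1) B ?_
      rw [Metric.mem_thickening_iff]
      exact ⟨x, hx, hd⟩
    have hthick : MeasurableSet (Metric.thickening ε.toReal B) :=
      Metric.isOpen_thickening.measurableSet
    constructor
    · have hsplit : (B ×ˢ (Set.univ : Set (Euc d))) ⊆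
          ((Set.univ : Set (Euc d)) ×ˢ Metric.thickening ε.toReal B) ∪
          {z : Euc d × Euc d | e ≤ rho z.1 z.2} := by
        rintro ⟨x, y⟩ ⟨hx, -⟩
        rcases le_or_gt e (rho x y) with h | h
        · exact Or.inr h
        · exact Or.inl ⟨trivial, hincl x y B hx h⟩
      have hμ'B : μ' B = Q (B ×ˢ Set.univ) := by
        rw [(hQ B hB).1, hμ', Measure.smul_apply, smul_eq_mul]
      calc μ' B = Q (B ×ˢ Set.univ) := hμ'B
        _ ≤ Q (((Set.univ : Set (Euc d)) ×ˢ Metric.thickening ε.toReal B) ∪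
              {z : Euc d × Euc d | e ≤ rho z.1 z.2}) := measure_mono hsplit
        _ ≤ Q ((Set.univ : Set (Euc d)) ×ˢ Metric.thickening ε.toReal B) +
              Q {z : Euc d × Euc d | e ≤ rho z.1 z.2} := measure_union_le _ _
        _ ≤ ν' (Metric.thickening ε.toReal B) + ε := by
            refine add_le_add (le_of_eq ?_) hMark
            rw [(hQ _ hthick).2, hν', Measure.smul_apply, smul_eq_mul]
    · have hsplit : ((Set.univ : Set (Euc d)) ×ˢ B) ⊆
          (Metric.thickening ε.toReal B ×ˢ (Set.univ : Set (Euc d))) ∪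
          {z : Euc d × Euc d | e ≤ rho z.1 z.2} := by
        rintro ⟨x, y⟩ ⟨-, hy⟩
        rcases le_or_gt e (rho x y) with h | h
        · exact Or.inr h
        · refine Or.inl ⟨hincl y x B hy ?_, trivial⟩
          rw [rho_comm]; exact h
      have hν'B : ν' B = Q (Set.univ ×ˢ B) := by
        rw [(hQ B hB).2, hν', Measure.smul_apply, smul_eq_mul]
      calc ν' B = Q (Set.univ ×ˢ B) := hν'B
        _ ≤ Q ((Metric.thickening ε.toReal B ×ˢ (Set.univ : Set (Euc d))) ∪
              {z : Euc d × Euc d | e ≤ rho z.1 z.2}) := measure_mono hsplit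
        _ ≤ Q (Metric.thickening ε.toReal B ×ˢ (Set.univ : Set (Euc d))) +
              Q {z : Euc d × Euc d | e ≤ rho z.1 z.2} := measure_union_le _ _
        _ ≤ μ' (Metric.thickening ε.toReal B) + ε := by
            refine add_le_add (le_of_eq ?_) hMark
            rw [(hQ _ hthick).1, hμ', Measure.smul_apply, smul_eq_mul]
  have hsc : μ' = ν' := by
    apply ext_of_generate_finite _ ?_ isPiSystem_isClosed ?_ ?_
    · rw [BorelSpace.measurable_eq (α := Euc d), borel_eq_generateFrom_isClosed]
    · intro A hA
      exact measure_eq_measure_of_levyProkhorovEDist_eq_zero_of_isClosed hLP hA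
        ⟨1, one_pos, measure_ne_top _ _⟩ ⟨1, one_pos, measure_ne_top _ _⟩
    · rw [hμ', hν', Measure.smul_apply, Measure.smul_apply, smul_eq_mul, smul_eq_mul, hμ, hν]
  ext A hA
  have h := congrArg (fun ρ : Measure (Euc d) => ρ A) hsc
  simp only [hμ', hν', Measure.smul_apply, smul_eq_mul] at h
  exact (ENNReal.mul_right_strictMono (ENNReal.ofReal_pos.mpr hm).ne'
    ENNReal.ofReal_ne_top).injective h

/-- Minkowski's inequality in `ℝ²` with the `ℓ^p` norm. -/
lemma minkowski_two {q a1 a2 b1 b2 : ℝ} (hq : 1 ≤ q) (ha1 : 0 ≤ a1) (ha2 : 0 ≤ a2)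
    (hb1 : 0 ≤ b1) (hb2 : 0 ≤ b2) :
    ((a1 + b1) ^ q + (a2 + b2) ^ q) ^ (1/q) ≤
      (a1 ^ q + a2 ^ q) ^ (1/q) + (b1 ^ q + b2 ^ q) ^ (1/q) := by
  have h := Real.Lp_add_le (Finset.univ : Finset (Fin 2)) (![a1, a2]) (![b1, b2]) hq
  simpa [Fin.sum_univ_two, abs_of_nonneg, ha1, ha2, hb1, hb2,
    abs_of_nonneg (add_nonneg ha1 hb1), abs_of_nonneg (add_nonneg ha2 hb2)] using h

end Hrep


end GammaAux

/-- `γ_p` is a metric on `M(m₁,m₂)`. -/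
theorem gammap_is_metric {d : ℕ} (hd : 1 ≤ d) (p m₁ m₂ : ℝ) (hp : 1 ≤ p)
    (hm₁ : 0 < m₁) (hm₂ : 0 < m₂)
    (μ ν η : Measure (Euc d) × Measure (Euc d))
    (hμ : μ.1 ∈ Mset d m₁ ∧ μ.2 ∈ Mset d m₂)
    (hν : ν.1 ∈ Mset d m₁ ∧ ν.2 ∈ Mset d m₂)
    (hη : η.1 ∈ Mset d m₁ ∧ η.2 ∈ Mset d m₂) :
    0 ≤ gammap p m₁ m₂ μ ν ∧
    gammap p m₁ m₂ μ ν = gammap p m₁ m₂ ν μ ∧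
    gammap p m₁ m₂ μ η ≤ gammap p m₁ m₂ μ ν + gammap p m₁ m₂ ν η ∧
    (gammap p m₁ m₂ μ ν = 0 ↔ μ = ν) := by
  clear hd
  have hp0 : (0:ℝ) < p := lt_of_lt_of_le one_pos hp
  have hμ1 : μ.1 Set.univ = ENNReal.ofReal m₁ := hμ.1
  have hμ2 : μ.2 Set.univ = ENNReal.ofReal m₂ := hμ.2
  have hν1 : ν.1 Set.univ = ENNReal.ofReal m₁ := hν.1
  have hν2 : ν.2 Set.univ = ENNReal.ofReal m₂ := hν.2
  have hη1 : η.1 Set.univ = ENNReal.ofReal m₁ := hη.1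
  have hη2 : η.2 Set.univ = ENNReal.ofReal m₂ := hη.2
  have hWnn : ∀ (m' : ℝ) (α β : Measure (Euc d)), 0 ≤ Wp p m' α β := fun _ _ _ =>
    GammaAux.wp_nonneg
  have hsumnn : ∀ (x y : Measure (Euc d) × Measure (Euc d)),
      0 ≤ Wp p m₁ x.1 y.1 ^ p + Wp p m₂ x.2 y.2 ^ p := fun x y =>
    add_nonneg (Real.rpow_nonneg (hWnn _ _ _) p) (Real.rpow_nonneg (hWnn _ _ _) p)
  refine ⟨Real.rpow_nonneg (hsumnn μ ν) _, ?_, ?_, ?_⟩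
  · have s1 : Wp p m₁ μ.1 ν.1 = Wp p m₁ ν.1 μ.1 := GammaAux.wp_symm hp0.le
    have s2 : Wp p m₂ μ.2 ν.2 = Wp p m₂ ν.2 μ.2 := GammaAux.wp_symm hp0.le
    simp only [gammap]
    rw [s1, s2]
  · -- triangle inequality
    have t1 : Wp p m₁ μ.1 η.1 ≤ Wp p m₁ μ.1 ν.1 + Wp p m₁ ν.1 η.1 :=
      GammaAux.wp_triangle hp hμ1 hν1 hη1
    have t2 : Wp p m₂ μ.2 η.2 ≤ Wp p m₂ μ.2 ν.2 + Wp p m₂ ν.2 η.2 :=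
      GammaAux.wp_triangle hp hμ2 hν2 hη2
    simp only [gammap]
    calc (Wp p m₁ μ.1 η.1 ^ p + Wp p m₂ μ.2 η.2 ^ p) ^ (1/p)
        ≤ ((Wp p m₁ μ.1 ν.1 + Wp p m₁ ν.1 η.1) ^ p +
            (Wp p m₂ μ.2 ν.2 + Wp p m₂ ν.2 η.2) ^ p) ^ (1/p) := by
          refine Real.rpow_le_rpow (hsumnn μ η) ?_ (by positivity)
          exact add_le_add (Real.rpow_le_rpow (hWnn _ _ _) t1 hp0.le)
            (Real.rpow_le_rpow (hWnn _ _ _) t2 hp0.le)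
      _ ≤ (Wp p m₁ μ.1 ν.1 ^ p + Wp p m₂ μ.2 ν.2 ^ p) ^ (1/p) +
            (Wp p m₁ ν.1 η.1 ^ p + Wp p m₂ ν.2 η.2 ^ p) ^ (1/p) :=
          GammaAux.minkowski_two hp (hWnn _ _ _) (hWnn _ _ _) (hWnn _ _ _) (hWnn _ _ _)
  · -- identity of indiscernibles
    constructor
    · intro h0
      simp only [gammap] at h0
      have hsum : Wp p m₁ μ.1 ν.1 ^ p + Wp p m₂ μ.2 ν.2 ^ p = 0 := by
        by_contra hne
        have hpos : 0 < Wp p m₁ μ.1 ν.1 ^ p + Wp p m₂ μ.2 ν.2 ^ p :=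
          lt_of_le_of_ne (hsumnn μ ν) (Ne.symm hne)
        have := Real.rpow_pos_of_pos hpos (1/p)
        linarith
      have h1nn : 0 ≤ Wp p m₁ μ.1 ν.1 ^ p := Real.rpow_nonneg (hWnn _ _ _) p
      have h2nn : 0 ≤ Wp p m₂ μ.2 ν.2 ^ p := Real.rpow_nonneg (hWnn _ _ _) p
      have hW1 : Wp p m₁ μ.1 ν.1 = 0 := by
        by_contra hne
        have hpos : 0 < Wp p m₁ μ.1 ν.1 := lt_of_le_of_ne (hWnn _ _ _) (Ne.symm hne)
        have := Real.rpow_pos_of_pos hpos p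
        linarith
      have hW2 : Wp p m₂ μ.2 ν.2 = 0 := by
        by_contra hne
        have hpos : 0 < Wp p m₂ μ.2 ν.2 := lt_of_le_of_ne (hWnn _ _ _) (Ne.symm hne)
        have := Real.rpow_pos_of_pos hpos p
        linarith
      have e1 : μ.1 = ν.1 := GammaAux.eq_of_wp_eq_zero hp hm₁ hμ1 hν1 hW1
      have e2 : μ.2 = ν.2 := GammaAux.eq_of_wp_eq_zero hp hm₂ hμ2 hν2 hW2
      exact Prod.ext e1 e2
    · rintro rfl
      simp only [gammap]
      rw [GammaAux.wp_self hp hμ1, GammaAux.wp_self hp hμ2,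
        Real.zero_rpow hp0.ne', add_zero, Real.zero_rpow (one_div_ne_zero hp0.ne')]
end
end

section
/- Let x_n = (1/n, 0, …, 0) ∈ ℝ^d and μ_n = δ_{x_n} − δ_0, whose Hahn–Jordan decomposition is (δ_{x_n}, δ_0) ∈ M(1,1), so μ_n ∈ SM(1,1). Then: (i) the sequence of pairs ((δ_{x_n}, δ_0))_{n≥1} is a Cauchy sequence with respect to γ_2, i.e., γ_2((δ_{x_n},δ_0),(δ_{x_m},δ_0)) → 0 as n, m → ∞; but (ii) there exists no signed measure μ ∈ SM(1,1), with Hahn–Jordan decomposition (μ¹,μ²) ∈ M(1,1), such that γ_2((δ_{x_n},δ_0),(μ¹,μ²)) → 0 as n → ∞. In particular, SM(1,1) equipped with the distance inherited from γ_2 via Hahn–Jordan decompositions is not a complete metric space. -/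
open MeasureTheory Set Filter

noncomputable section

/-- The sequence `x_n = (1/n, 0, …, 0) ∈ ℝ^d`. -/
def xseq (d : ℕ) (hd : 0 < d) (n : ℕ) : Euc d :=
  EuclideanSpace.single (⟨0, hd⟩ : Fin d) (1 / (n : ℝ))

lemma rpow_two' (t : ℝ) : t ^ (2:ℝ) = t ^ 2 := by
  rw [show (2:ℝ) = ((2:ℕ):ℝ) by norm_num, Real.rpow_natCast]

lemma rho_nonneg {d : ℕ} (x y : Euc d) : 0 ≤ rho x y := le_min one_pos.le dist_nonneg

lemma rho_le_one {d : ℕ} (x y : Euc d) : rho x y ≤ 1 := min_le_left _ _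

lemma rho_cont {d : ℕ} (x : Euc d) : Continuous fun y : Euc d => (rho x y)^2 := by
  unfold rho
  exact (continuous_const.min (continuous_const.dist continuous_id)).pow 2

lemma rho_cont_fst {d : ℕ} (y : Euc d) : Continuous fun x : Euc d => (rho x y)^2 := by
  unfold rho
  exact (continuous_const.min (continuous_id.dist continuous_const)).pow 2

lemma hsq (t : ℝ) (ht : 0 ≤ t) : (t ^ ((1:ℝ)/2)) ^ (2:ℝ) = t := by
  rw [← Real.rpow_mul ht]; norm_num

/-- Every coupling of `dirac x` and `μ` gives integral `∫ rho x y ^ 2 dμ`. -/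
lemma hrep_integral {d : ℕ} (x : Euc d) (μ : Measure (Euc d))
    {Q : Measure (Euc d × Euc d)} (hQ : Q ∈ Hrep 1 (Measure.dirac x) μ) :
    ∫ z, rho z.1 z.2 ^ 2 ∂Q = ∫ y, rho x y ^ 2 ∂μ := by
  have hc : Q (({x}ᶜ : Set (Euc d)) ×ˢ Set.univ) = 0 := by
    have := (hQ {x}ᶜ (measurableSet_singleton x).compl).1
    rw [this]
    simp [Measure.dirac_apply' _ (measurableSet_singleton x).compl]
  have hae : ∀ᵐ z ∂Q, z.1 = x := by
    rw [ae_iff]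
    convert hc using 2
    ext z
    simp
  have h2 : ∫ z, rho z.1 z.2 ^ 2 ∂Q = ∫ z, rho x z.2 ^ 2 ∂Q :=
    integral_congr_ae (hae.mono fun z hz => by dsimp only; rw [hz])
  have hmap : Q.map Prod.snd = μ := by
    ext A hA
    rw [Measure.map_apply measurable_snd hA,
      show Prod.snd ⁻¹' A = (Set.univ ×ˢ A : Set (Euc d × Euc d)) from by ext z; simp]
    have := (hQ A hA).2
    simpa using this
  rw [h2, ← hmap,
    integral_map measurable_snd.aemeasurable (rho_cont x).aestronglyMeasurable]

lemma wp_dirac {d : ℕ} (x : Euc d) (μ : Measure (Euc d)) [IsFiniteMeasure μ]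
    (hμ : μ Set.univ = 1) :
    Wp 2 1 (Measure.dirac x) μ = (∫ y, rho x y ^ 2 ∂μ) ^ ((1:ℝ)/2) := by
  have hmem : (Measure.dirac x).prod μ ∈ Hrep 1 (Measure.dirac x) μ := by
    intro A hA
    constructor
    · rw [Measure.prod_prod, hμ]; simp
    · rw [Measure.prod_prod]; simp
  have key : (fun Q : Measure (Euc d × Euc d) => ∫ z, rho z.1 z.2 ^ (2:ℝ) ∂Q)
      '' Hrep 1 (Measure.dirac x) μ = {∫ y, rho x y ^ 2 ∂μ} := by
    apply Set.eq_singleton_iff_unique_mem.mpr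
    constructor
    · exact ⟨_, hmem, by simp only [rpow_two']; exact hrep_integral x μ hmem⟩
    · rintro v ⟨Q, hQ, rfl⟩
      simp only [rpow_two']
      exact hrep_integral x μ hQ
  rw [Wp, key, csInf_singleton]

lemma wp_dirac_dirac {d : ℕ} (a b : Euc d) :
    Wp 2 1 (Measure.dirac a) (Measure.dirac b) = rho a b := by
  rw [wp_dirac a (Measure.dirac b) (by simp), integral_dirac, ← rpow_two',
    ← Real.rpow_mul (rho_nonneg a b)]
  norm_num

lemma gammap_dirac {d : ℕ} (a b : Euc d) :
    gammap 2 1 1 (Measure.dirac a, Measure.dirac (0 : Euc d))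
      (Measure.dirac b, Measure.dirac (0 : Euc d)) = rho a b := by
  have h0 : rho (0:Euc d) 0 = 0 := by simp [rho]
  rw [gammap]
  simp only [wp_dirac_dirac, h0]
  rw [Real.zero_rpow (by norm_num), add_zero, ← Real.rpow_mul (rho_nonneg a b)]
  norm_num

/-- If the integral of `rho 0 y ^ 2` vanishes, the measure is concentrated at `0`. -/
lemma conc {d : ℕ} (μ : Measure (Euc d)) [IsFiniteMeasure μ]
    (h : ∫ y, rho (0:Euc d) y ^ 2 ∂μ = 0) : μ ({0}ᶜ) = 0 := by
  have hint : Integrable (fun y => rho (0:Euc d) y ^ 2) μ := by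
    refine (integrable_const (1:ℝ)).mono' (rho_cont 0).aestronglyMeasurable
      (ae_of_all _ fun y => ?_)
    rw [Real.norm_eq_abs, abs_of_nonneg (sq_nonneg _)]
    exact pow_le_one₀ (rho_nonneg _ _) (rho_le_one _ _)
  have hae := (integral_eq_zero_iff_of_nonneg (fun y => sq_nonneg _) hint).mp h
  have hae0 : ∀ᵐ y ∂μ, y = (0:Euc d) := by
    refine hae.mono fun y hy => ?_
    have h1 : rho (0:Euc d) y = 0 := pow_eq_zero_iff (n := 2) (by norm_num) |>.mp hy
    rcases min_eq_iff.mp h1 with ⟨h2, _⟩ | ⟨h2, _⟩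
    · norm_num at h2
    · exact (dist_eq_zero.mp h2).symm
  rw [show ({0}ᶜ : Set (Euc d)) = {y | ¬ y = (0:Euc d)} from by ext y; simp, ← ae_iff]
  exact hae0

lemma single_zero' {d : ℕ} (i : Fin d) : EuclideanSpace.single i (0:ℝ) = 0 := by
  ext j; simp [EuclideanSpace.single_apply]

/-- the pairs `(δ_{x_n}, δ_0)` form a `γ₂`-Cauchy sequence of Hahn–Jordan
decompositions of elements of `SM(1,1)`, but no signed measure in `SM(1,1)` (i.e. no pair of
mutually singular measures of mass 1 each) is a `γ₂`-limit of this sequence; in particular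
`SM(1,1)` with the metric inherited from `γ₂` is not complete. -/
theorem SM_not_complete {d : ℕ} (hd : 0 < d) :
    -- (i) Cauchy with respect to γ₂
    (∀ ε : ℝ, 0 < ε → ∃ N : ℕ, ∀ n ≥ N, ∀ k ≥ N,
      gammap 2 1 1 (Measure.dirac (xseq d hd n), Measure.dirac (0 : Euc d))
        (Measure.dirac (xseq d hd k), Measure.dirac (0 : Euc d)) < ε) ∧
    -- (ii) no limit whose components form the Hahn–Jordan decomposition of a
    -- signed measure in SM(1,1)
    ¬ ∃ μ1 μ2 : Measure (Euc d),
        μ1 Set.univ = 1 ∧ μ2 Set.univ = 1 ∧ μ1 ⟂ₘ μ2 ∧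
        Tendsto (fun n => gammap 2 1 1
          (Measure.dirac (xseq d hd n), Measure.dirac (0 : Euc d)) (μ1, μ2))
          atTop (nhds 0) := by
  constructor
  · -- Part (i)
    intro ε hε
    obtain ⟨M, hM⟩ := exists_nat_one_div_lt hε
    refine ⟨M + 1, fun n hn k hk => ?_⟩
    rw [gammap_dirac]
    have hdist : dist (xseq d hd n) (xseq d hd k) = dist (1/(n:ℝ)) (1/(k:ℝ)) :=
      EuclideanSpace.dist_single_same _ _ _
    have hb : ∀ m : ℕ, m ≥ M + 1 → (0:ℝ) ≤ 1/(m:ℝ) ∧ 1/(m:ℝ) ≤ 1/((M:ℝ)+1) := by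
      intro m hm
      have hm0 : (0:ℝ) < (M:ℝ) + 1 := by positivity
      have hmm : ((M:ℝ)+1) ≤ (m:ℝ) := by exact_mod_cast hm
      exact ⟨by positivity, one_div_le_one_div_of_le hm0 hmm⟩
    obtain ⟨hn0, hn1⟩ := hb n hn
    obtain ⟨hk0, hk1⟩ := hb k hk
    calc rho (xseq d hd n) (xseq d hd k) ≤ dist (xseq d hd n) (xseq d hd k) :=
          min_le_right _ _
      _ = |1/(n:ℝ) - 1/(k:ℝ)| := by rw [hdist, Real.dist_eq]
      _ ≤ 1/((M:ℝ)+1) := abs_sub_le_iff.mpr ⟨by linarith, by linarith⟩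
      _ < ε := hM
  · -- Part (ii)
    rintro ⟨μ1, μ2, hμ1, hμ2, hsing, htend⟩
    haveI : IsFiniteMeasure μ1 := ⟨by rw [hμ1]; exact ENNReal.one_lt_top⟩
    haveI : IsFiniteMeasure μ2 := ⟨by rw [hμ2]; exact ENNReal.one_lt_top⟩
    set I1 : ℕ → ℝ := fun n => ∫ y, rho (xseq d hd n) y ^ 2 ∂μ1 with hI1def
    set I2 : ℝ := ∫ y, rho (0:Euc d) y ^ 2 ∂μ2 with hI2def
    have hI1n : ∀ n, 0 ≤ I1 n := fun n => integral_nonneg fun y => sq_nonneg _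
    have hI2n : 0 ≤ I2 := integral_nonneg fun y => sq_nonneg _
    have hg : ∀ n, gammap 2 1 1
        (Measure.dirac (xseq d hd n), Measure.dirac (0 : Euc d)) (μ1, μ2)
        = (I1 n + I2) ^ ((1:ℝ)/2) := by
      intro n
      rw [gammap]
      dsimp only
      rw [wp_dirac _ _ hμ1, wp_dirac _ _ hμ2, hsq _ (hI1n n), hsq _ hI2n]
    rw [show (fun n => gammap 2 1 1
        (Measure.dirac (xseq d hd n), Measure.dirac (0 : Euc d)) (μ1, μ2))
        = fun n => (I1 n + I2) ^ ((1:ℝ)/2) from funext hg] at htend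
    -- I2 = 0
    have hI2le : ∀ n : ℕ, I2 ^ ((1:ℝ)/2) ≤ (I1 n + I2) ^ ((1:ℝ)/2) := fun n =>
      Real.rpow_le_rpow hI2n (le_add_of_nonneg_left (hI1n n)) (by norm_num)
    have hI2half : I2 ^ ((1:ℝ)/2) ≤ 0 := ge_of_tendsto' htend hI2le
    have hI2 : I2 = 0 := by
      by_contra h
      have hpos : 0 < I2 := lt_of_le_of_ne hI2n (Ne.symm h)
      exact absurd hI2half (not_le.mpr (Real.rpow_pos_of_pos hpos _))
    -- I1 n → 0
    have hI1lim : Tendsto I1 atTop (nhds 0) := by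
      have h1 : ∀ n, I1 n = ((I1 n + I2) ^ ((1:ℝ)/2)) ^ 2 := by
        intro n
        rw [← rpow_two', hsq _ (by linarith [hI1n n, hI2n]), hI2, add_zero]
      rw [show I1 = fun n => ((I1 n + I2) ^ ((1:ℝ)/2)) ^ 2 from funext h1]
      simpa using htend.pow 2
    -- DCT : I1 n → ∫ rho 0 y ^ 2 ∂μ1
    have hxlim : Tendsto (fun n => xseq d hd n) atTop (nhds (0:Euc d)) := by
      rw [tendsto_iff_dist_tendsto_zero]
      have hd1 : ∀ n : ℕ, dist (xseq d hd n) 0 = |1/(n:ℝ)| := by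
        intro n
        rw [xseq, show (0:Euc d) = EuclideanSpace.single (⟨0,hd⟩ : Fin d) (0:ℝ) from
          (single_zero' _).symm, EuclideanSpace.dist_single_same, Real.dist_eq, sub_zero]
      rw [show (fun n : ℕ => dist (xseq d hd n) 0) = fun n : ℕ => |1/(n:ℝ)| from
        funext hd1]
      simpa using (tendsto_one_div_atTop_nhds_zero_nat (𝕜 := ℝ)).abs
    have hDCT : Tendsto I1 atTop (nhds (∫ y, rho (0:Euc d) y ^ 2 ∂μ1)) := by
      apply tendsto_integral_of_dominated_convergence (fun _ => (1:ℝ))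
      · exact fun n => (rho_cont (xseq d hd n)).aestronglyMeasurable
      · exact integrable_const 1
      · intro n
        refine ae_of_all _ fun y => ?_
        rw [Real.norm_eq_abs, abs_of_nonneg (sq_nonneg _)]
        exact pow_le_one₀ (rho_nonneg _ _) (rho_le_one _ _)
      · exact ae_of_all _ fun y =>
          ((rho_cont_fst y).continuousAt.tendsto).comp hxlim
    have hI1zero : ∫ y, rho (0:Euc d) y ^ 2 ∂μ1 = 0 :=
      tendsto_nhds_unique hDCT hI1lim
    -- both measures are concentrated at 0
    have hc1 : μ1 ({0}ᶜ) = 0 := conc μ1 hI1zero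
    have hc2 : μ2 ({0}ᶜ) = 0 := conc μ2 hI2
    -- contradiction with mutual singularity
    obtain ⟨s, hs, h1s, h2s⟩ := hsing
    by_cases h0 : (0:Euc d) ∈ s
    · have hsub : (Set.univ : Set (Euc d)) ⊆ ({0}ᶜ : Set (Euc d)) ∪ s := by
        intro y _
        by_cases hy : y = 0
        · right; rwa [hy]
        · left; exact hy
      have : μ1 Set.univ ≤ μ1 ({0}ᶜ : Set (Euc d)) + μ1 s :=
        (measure_mono hsub).trans (measure_union_le _ _)
      rw [hμ1, hc1, h1s] at this
      simp at this
    · have hsub : (Set.univ : Set (Euc d)) ⊆ ({0}ᶜ : Set (Euc d)) ∪ sᶜ := by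
        intro y _
        by_cases hy : y = 0
        · right; rw [hy]; exact h0
        · left; exact hy
      have : μ2 Set.univ ≤ μ2 ({0}ᶜ : Set (Euc d)) + μ2 sᶜ :=
        (measure_mono hsub).trans (measure_union_le _ _)
      rw [hμ2, hc2, h2s] at this
      simp at this
end
end

section
/- Let C > 0 and let h : ℝ → ℝ be twice continuously differentiable with h'(0) = 0 and |h''(s)| ≤ C for all s ∈ ℝ. Define K : ℝ² → ℝ² by K(0) = 0 and, for r = (r₁,r₂) ≠ 0, K(r) = h'(‖r‖)·(−r₂, r₁)/‖r‖, where ‖·‖ is the Euclidean norm (so K = ∇⊥g for g(r) = h(‖r‖), with ∇⊥ = (−∂/∂r₂, ∂/∂r₁)). Then K is Lipschitz with constant 2C: ‖K(r) − K(q)‖ ≤ 2C‖r − q‖ for all r, q ∈ ℝ². In particular, K is continuous on all of ℝ². -/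
open MeasureTheory Set

noncomputable section

/-- `ℝ²` with the Euclidean norm. -/
abbrev Euc2 := EuclideanSpace ℝ (Fin 2)

/-- Rotation by 90 degrees. -/
noncomputable def Jrot (v : Euc2) : Euc2 :=
  (WithLp.equiv 2 (Fin 2 → ℝ)).symm ![-(v 1), v 0]

lemma Jrot_norm (v : Euc2) : ‖Jrot v‖ = ‖v‖ := by
  simp [Jrot, EuclideanSpace.norm_eq, Fin.sum_univ_two]
  ring_nf

lemma Jrot_lin (t : ℝ) (v w : Euc2) : Jrot (t • v - w) = t • Jrot v - Jrot w := by
  ext i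
  fin_cases i <;> (simp [Jrot]; try ring)

/-- Key geometric lemma: radial contraction towards the smaller norm. -/
lemma radial_contract (r q : Euc2) (hr : 0 < ‖r‖) (hba : ‖q‖ ≤ ‖r‖) :
    ‖(‖q‖/‖r‖) • r - q‖ ≤ ‖r - q‖ := by
  set a := ‖r‖; set b := ‖q‖
  have hip : inner ℝ r q ≤ a * b := real_inner_le_norm r q
  have h1 : ‖(b/a) • r - q‖ ^ 2 ≤ ‖r - q‖ ^ 2 := by
    rw [norm_sub_sq_real, norm_sub_sq_real, real_inner_smul_left, norm_smul]
    rw [Real.norm_eq_abs, abs_of_nonneg (by positivity : (0:ℝ) ≤ b/a)]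
    have hb : 0 ≤ b := norm_nonneg q
    have key : (b/a*a)^2 - 2*(b/a*inner ℝ r q) ≤ a^2 - 2*(inner ℝ r q : ℝ) := by
      rw [div_mul_cancel₀ _ hr.ne']
      have : (1 - b/a) * ((inner ℝ r q : ℝ)) ≤ (1 - b/a) * (a*b) := by
        apply mul_le_mul_of_nonneg_left hip
        have : b/a ≤ 1 := div_le_one_of_le₀ hba hr.le
        linarith
      nlinarith [sq_nonneg (a - b), div_mul_cancel₀ b hr.ne']
    linarith
  have := Real.sqrt_le_sqrt h1
  simpa [Real.sqrt_sq (norm_nonneg _)] using this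

/-- the regularized Biot–Savart kernel `K = ∇⊥g`, with `g(r) = h(‖r‖)`,
`h` twice continuously differentiable, `h'(0) = 0` and `|h''| ≤ C`, is Lipschitz with
constant `2C` (in particular continuous on all of `ℝ²`). Explicitly, `K(0) = 0` and
`K(r) = h'(‖r‖)·(−r₂, r₁)/‖r‖` for `r ≠ 0`. -/
theorem regularized_kernel_lipschitz (C : ℝ) (hC : 0 < C)
    (h : ℝ → ℝ) (hh : ContDiff ℝ 2 h)
    (h'0 : deriv h 0 = 0) (h''bd : ∀ s : ℝ, |deriv (deriv h) s| ≤ C)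
    (K : Euc2 → Euc2) (hK0 : K 0 = 0)
    (hK : ∀ r : Euc2, r ≠ 0 →
      K r 0 = deriv h ‖r‖ * (-(r 1)) / ‖r‖ ∧ K r 1 = deriv h ‖r‖ * (r 0) / ‖r‖) :
    ∀ r q : Euc2, ‖K r - K q‖ ≤ 2 * C * ‖r - q‖ := by
  -- `deriv h` is Lipschitz with constant `C`
  have hd : Differentiable ℝ (deriv h) := by
    have h2 : ContDiff ℝ ((1:ℕ)+1) h := by exact_mod_cast hh
    exact (contDiff_succ_iff_deriv.mp h2).2.2.differentiable (by simp)
  have hlip : ∀ x y : ℝ, |deriv h y - deriv h x| ≤ C * |y - x| := by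
    intro x y
    have := Convex.norm_image_sub_le_of_norm_deriv_le (f := deriv h) (s := Set.univ)
      (fun z _ => hd z) (fun z _ => h''bd z) convex_univ (Set.mem_univ x) (Set.mem_univ y)
    simpa [Real.norm_eq_abs] using this
  have hbound : ∀ s : ℝ, 0 ≤ s → |deriv h s| ≤ C * s := by
    intro s hs
    simpa [h'0, abs_of_nonneg hs] using hlip 0 s
  -- representation of `K` via `Jrot`
  have hKr : ∀ r : Euc2, r ≠ 0 → K r = (deriv h ‖r‖ / ‖r‖) • Jrot r := by
    intro r hr
    ext i; fin_cases i
    · simp [Jrot, (hK r hr).1]; ring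
    · simp [Jrot, (hK r hr).2]; ring
  -- main one-sided estimate
  have main : ∀ r q : Euc2, ‖q‖ ≤ ‖r‖ → ‖K r - K q‖ ≤ 2 * C * ‖r - q‖ := by
    intro r q hba
    by_cases hr0 : r = 0
    · have hq0 : q = 0 := by
        have h1 : ‖q‖ ≤ 0 := by simpa [hr0] using hba
        simpa using le_antisymm h1 (norm_nonneg q)
      simp [hr0, hq0, hK0]
    · have ha : 0 < ‖r‖ := norm_pos_iff.mpr hr0
      by_cases hq0 : q = 0
      · rw [hq0, hK0, sub_zero, hKr r hr0, norm_smul, Jrot_norm, Real.norm_eq_abs,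
          abs_div, abs_of_nonneg ha.le, div_mul_cancel₀ _ ha.ne']
        have := hbound ‖r‖ ha.le
        have h2 : ‖r - (0:Euc2)‖ = ‖r‖ := by simp
        rw [h2]
        nlinarith
      · have hb : 0 < ‖q‖ := norm_pos_iff.mpr hq0
        set a := ‖r‖
        set b := ‖q‖
        have decomp : K r - K q = ((deriv h a - deriv h b)/a) • Jrot r
            + (deriv h b) • ((a⁻¹) • Jrot r - (b⁻¹) • Jrot q) := by
          rw [hKr r hr0, hKr q hq0]
          match_scalars <;> field_simp <;> simp only [a, b] <;> ring
        have hX : ‖((deriv h a - deriv h b)/a) • Jrot r‖ ≤ C * ‖r - q‖ := by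
          rw [norm_smul, Jrot_norm, Real.norm_eq_abs, abs_div, abs_of_nonneg ha.le,
            div_mul_cancel₀ _ ha.ne']
          calc |deriv h a - deriv h b| ≤ C * |a - b| := hlip b a
            _ ≤ C * ‖r - q‖ := by
                apply mul_le_mul_of_nonneg_left (abs_norm_sub_norm_le r q) hC.le
        have hY : ‖(deriv h b) • ((a⁻¹) • Jrot r - (b⁻¹) • Jrot q)‖ ≤ C * ‖r - q‖ := by
          rw [norm_smul, Real.norm_eq_abs]
          have h1 : b * ‖(a⁻¹) • Jrot r - (b⁻¹) • Jrot q‖ ≤ ‖r - q‖ := by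
            have h2 : b • ((a⁻¹) • Jrot r - (b⁻¹) • Jrot q) = Jrot ((b/a) • r - q) := by
              rw [Jrot_lin]
              match_scalars <;> field_simp
            calc b * ‖(a⁻¹) • Jrot r - (b⁻¹) • Jrot q‖
                = ‖b • ((a⁻¹) • Jrot r - (b⁻¹) • Jrot q)‖ := by
                  rw [norm_smul, Real.norm_eq_abs, abs_of_nonneg hb.le]
              _ = ‖(b/a) • r - q‖ := by rw [h2, Jrot_norm]
              _ ≤ ‖r - q‖ := radial_contract r q ha hba
          calc |deriv h b| * ‖(a⁻¹) • Jrot r - (b⁻¹) • Jrot q‖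
              ≤ (C * b) * ‖(a⁻¹) • Jrot r - (b⁻¹) • Jrot q‖ :=
                mul_le_mul_of_nonneg_right (hbound b hb.le) (norm_nonneg _)
            _ = C * (b * ‖(a⁻¹) • Jrot r - (b⁻¹) • Jrot q‖) := by ring
            _ ≤ C * ‖r - q‖ := mul_le_mul_of_nonneg_left h1 hC.le
        calc ‖K r - K q‖ = ‖((deriv h a - deriv h b)/a) • Jrot r
              + (deriv h b) • ((a⁻¹) • Jrot r - (b⁻¹) • Jrot q)‖ := by rw [decomp]
          _ ≤ ‖((deriv h a - deriv h b)/a) • Jrot r‖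
              + ‖(deriv h b) • ((a⁻¹) • Jrot r - (b⁻¹) • Jrot q)‖ := norm_add_le _ _
          _ ≤ C * ‖r - q‖ + C * ‖r - q‖ := add_le_add hX hY
          _ = 2 * C * ‖r - q‖ := by ring
  intro r q
  rcases le_total ‖q‖ ‖r‖ with hle | hle
  · exact main r q hle
  · calc ‖K r - K q‖ = ‖K q - K r‖ := norm_sub_rev _ _
      _ ≤ 2 * C * ‖q - r‖ := main q r hle
      _ = 2 * C * ‖r - q‖ := by rw [norm_sub_rev]
end
end
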